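/- Let L be a finite list whose entries are literals x_i or x̄_i for variables i ∈ {1,…,n}, with fitness v(L) defined by the MAJORITY rule: variable i is expressed iff L contains at least one x_i and #{occurrences of x_i} ≥ #{occurrences of x̄_i}, and v(L) is the number of expressed variables. Let s(L) be the length of L, let r(L) be the number of redundant positions (positions whose deletion does not change v), and let A(L) ⊆ {1,…,n} be the set of variables i such that neither x_i nor x̄_i occurs in L. Then s(L) − v(L) ≤ 4·r(L), and |A(L)| + r(L) ≥ n − v(L). -/

import Mathlib

/-- A literal over `n` variables: `(true, i)` represents `x i` and `(false, i)`
represents the negated literal `x̄ i`. -/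
abbrev Lit (n : ℕ) : Type := Bool × Fin n

/-- For MAJORITY, variable `i` is expressed in `L` iff `L` contains at least one
occurrence of `x i` and the number of occurrences of `x i` is at least the number of
occurrences of `x̄ i`. -/
def MajExpressed {n : ℕ} (L : List (Lit n)) (i : Fin n) : Prop :=
  0 < L.count (true, i) ∧ L.count (false, i) ≤ L.count (true, i)

instance {n : ℕ} (L : List (Lit n)) (i : Fin n) : Decidable (MajExpressed L i) := by
  unfold MajExpressed; infer_instance

/-- The MAJORITY fitness `v(L)`: the number of expressed variables. -/
def majFitness {n : ℕ} (L : List (Lit n)) : ℕ :=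
  (Finset.univ.filter (fun i => MajExpressed L i)).card

/-- Number of redundant positions: deleting the entry leaves the fitness unchanged. -/
def majRedundant {n : ℕ} (L : List (Lit n)) : ℕ :=
  ((Finset.range L.length).filter
    (fun p => majFitness (L.eraseIdx p) = majFitness L)).card

/-- The set of variables `i` such that neither `x i` nor `x̄ i` occurs in `L`. -/
def majAbsent {n : ℕ} (L : List (Lit n)) : Finset (Fin n) :=
  Finset.univ.filter (fun i => (true, i) ∉ L ∧ (false, i) ∉ L)

namespace MajAux

/-- Deleting one positive occurrence preserves the expressed-status. -/
def presPos (a b : ℕ) : Prop := ((0 < a - 1 ∧ b ≤ a - 1) ↔ (0 < a ∧ b ≤ a))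

/-- Deleting one negative occurrence preserves the expressed-status. -/
def presNeg (a b : ℕ) : Prop := ((0 < a ∧ b - 1 ≤ a) ↔ (0 < a ∧ b ≤ a))

instance (a b : ℕ) : Decidable (presPos a b) := by unfold presPos; infer_instance
instance (a b : ℕ) : Decidable (presNeg a b) := by unfold presNeg; infer_instance

/-- Deleting one occurrence of the literal `x` from `L` preserves the fitness. -/
def pres {n : ℕ} (L : List (Lit n)) (x : Lit n) : Prop :=
  if x.1 then presPos (L.count (true, x.2)) (L.count (false, x.2))
  else presNeg (L.count (true, x.2)) (L.count (false, x.2))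

instance {n : ℕ} (L : List (Lit n)) (x : Lit n) : Decidable (pres L x) := by
  unfold pres; infer_instance

lemma count_eraseIdx {α : Type*} [BEq α] [LawfulBEq α] [DecidableEq α] :
    ∀ (L : List α) (p : ℕ) (h : p < L.length) (y : α),
    (L.eraseIdx p).count y = L.count y - (if L[p]'h = y then 1 else 0)
  | x :: t, 0, _, y => by
      by_cases hxy : x = y
      · subst hxy
        simp [List.count_cons]
      · simp [List.count_cons, hxy, fun e : y = x => hxy e.symm]
  | x :: t, p + 1, h, y => by
      have hp : p < t.length := by simpa using Nat.lt_of_succ_lt_succ h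
      simp only [List.eraseIdx_cons_succ, List.count_cons,
        count_eraseIdx t p hp y, List.getElem_cons_succ, beq_iff_eq]
      by_cases ht : t[p] = y
      · have hc : 0 < t.count y := List.count_pos_iff.2 (ht ▸ List.getElem_mem hp)
        simp only [if_pos ht]
        split_ifs <;> omega
      · simp [ht]

lemma expressed_erase {n : ℕ} (L : List (Lit n)) (p : ℕ) (h : p < L.length) (j : Fin n)
    (hj : j ≠ (L[p]'h).2) : MajExpressed (L.eraseIdx p) j ↔ MajExpressed L j := by
  have h1 : L[p]'h ≠ (true, j) := fun e => hj (by rw [e])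
  have h2 : L[p]'h ≠ (false, j) := fun e => hj (by rw [e])
  unfold MajExpressed
  rw [count_eraseIdx L p h, count_eraseIdx L p h, if_neg h1, if_neg h2]
  simp

lemma card_filter_eq_iff {n : ℕ} (P Q : Fin n → Prop) [DecidablePred P] [DecidablePred Q]
    (i : Fin n) (hagree : ∀ j, j ≠ i → (P j ↔ Q j)) :
    (Finset.univ.filter P).card = (Finset.univ.filter Q).card ↔ (P i ↔ Q i) := by
  rw [Finset.card_filter, Finset.card_filter,
    ← Finset.sum_erase_add _ _ (Finset.mem_univ i),
    ← Finset.sum_erase_add _ _ (Finset.mem_univ i)]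
  have hs : (∑ j ∈ Finset.univ.erase i, if P j then 1 else 0) =
      ∑ j ∈ Finset.univ.erase i, if Q j then 1 else 0 :=
    Finset.sum_congr rfl fun j hj => by
      have := hagree j (Finset.ne_of_mem_erase hj)
      split_ifs <;> tauto
  rw [hs]
  by_cases hP : P i <;> by_cases hQ : Q i <;> simp [hP, hQ] <;> omega


lemma redundant_iff {n : ℕ} (L : List (Lit n)) (p : ℕ) (h : p < L.length) :
    majFitness (L.eraseIdx p) = majFitness L ↔ pres L (L[p]'h) := by
  rcases hx : L[p]'h with ⟨s, i⟩
  have hagree : ∀ j, j ≠ i → (MajExpressed (L.eraseIdx p) j ↔ MajExpressed L j) := by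
    intro j hj
    exact expressed_erase L p h j (by rw [hx]; exact hj)
  unfold majFitness
  rw [card_filter_eq_iff _ _ i hagree]
  unfold MajExpressed
  rw [count_eraseIdx L p h, count_eraseIdx L p h, hx]
  cases s
  · simp [pres, presNeg]
  · simp [pres, presPos]

lemma sum_option {α : Type*} (L : List α) (q : α → Bool) :
    (∑ p ∈ Finset.range L.length, if (L[p]?.any q) = true then 1 else 0) = L.countP q := by
  induction L with
  | nil => simp
  | cons x t ih =>
    rw [List.countP_cons, ← ih, List.length_cons, Finset.sum_range_succ']
    simp

lemma redundant_eq_countP {n : ℕ} (L : List (Lit n)) :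
    majRedundant L = L.countP (fun x => decide (pres L x)) := by
  rw [← sum_option]
  unfold majRedundant
  rw [Finset.card_filter]
  refine Finset.sum_congr rfl fun p hp => ?_
  have hh : p < L.length := Finset.mem_range.1 hp
  rw [List.getElem?_eq_getElem hh]
  simp only [Option.any_some, decide_eq_true_eq]
  have := redundant_iff L p hh
  split_ifs with h1 h2 h2 <;> first | rfl | (exfalso; tauto)

lemma countP_eq_sum {α : Type*} [Fintype α] [BEq α] [LawfulBEq α] [DecidableEq α]
    (L : List α) (q : α → Bool) :
    L.countP q = ∑ x : α, if q x then L.count x else 0 := by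
  induction L with
  | nil => simp
  | cons y t ih =>
    rw [List.countP_cons, ih]
    have key : ∀ x : α, (if q x then (y :: t).count x else 0) =
        (if q x then t.count x else 0) + (if x = y then (if q x then 1 else 0) else 0) := by
      intro x
      by_cases hq : q x
      · rcases eq_or_ne x y with rfl | hxy
        · simp [hq]
        · simp [hq, hxy, List.count_cons_of_ne hxy.symm]
      · simp [hq]
    rw [Finset.sum_congr rfl fun x _ => key x, Finset.sum_add_distrib,
      Finset.sum_ite_eq' Finset.univ y (fun x => if q x then 1 else 0)]
    simp

lemma length_eq_sum {n : ℕ} (L : List (Lit n)) :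
    L.length = ∑ i : Fin n, (L.count (true, i) + L.count (false, i)) := by
  have h : L.length = ∑ x : Lit n, L.count x := by
    simpa using countP_eq_sum L (fun _ => true)
  rw [h, Fintype.sum_prod_type, Fintype.sum_bool, ← Finset.sum_add_distrib]

lemma redundant_eq_sum {n : ℕ} (L : List (Lit n)) :
    majRedundant L = ∑ i : Fin n,
      ((if presPos (L.count (true, i)) (L.count (false, i)) then L.count (true, i) else 0) +
       (if presNeg (L.count (true, i)) (L.count (false, i)) then L.count (false, i) else 0)) := by
  rw [redundant_eq_countP, countP_eq_sum, Fintype.sum_prod_type, Fintype.sum_bool,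
    ← Finset.sum_add_distrib]
  refine Finset.sum_congr rfl fun i _ => ?_
  simp [pres]

lemma fitness_eq_sum {n : ℕ} (L : List (Lit n)) :
    majFitness L = ∑ i : Fin n,
      (if 0 < L.count (true, i) ∧ L.count (false, i) ≤ L.count (true, i) then 1 else 0) := by
  unfold majFitness
  rw [Finset.card_filter]
  exact Finset.sum_congr rfl fun i _ => by unfold MajExpressed; rfl

lemma absent_eq_sum {n : ℕ} (L : List (Lit n)) :
    (majAbsent L).card = ∑ i : Fin n,
      (if L.count (true, i) = 0 ∧ L.count (false, i) = 0 then 1 else 0) := by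
  unfold majAbsent
  rw [Finset.card_filter]
  refine Finset.sum_congr rfl fun i _ => ?_
  simp [List.count_eq_zero]

lemma point1 (a b : ℕ) : a + b ≤
    4 * ((if presPos a b then a else 0) + (if presNeg a b then b else 0)) +
      (if 0 < a ∧ b ≤ a then 1 else 0) := by
  split_ifs <;> unfold presPos presNeg at * <;> omega

lemma point2 (a b : ℕ) : 1 ≤
    ((if a = 0 ∧ b = 0 then 1 else 0) +
      ((if presPos a b then a else 0) + (if presNeg a b then b else 0))) +
      (if 0 < a ∧ b ≤ a then 1 else 0) := by
  split_ifs <;> unfold presPos presNeg at * <;> omega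

end MajAux

/-- **Size and absent-variable bounds for MAJORITY:** `s(L) - v(L) ≤ 4 r(L)` and
`|A(L)| + r(L) ≥ n - v(L)`. -/
theorem majority_size_and_absent_bounds {n : ℕ} (L : List (Lit n)) :
    L.length - majFitness L ≤ 4 * majRedundant L ∧
    n - majFitness L ≤ (majAbsent L).card + majRedundant L := by
  classical
  constructor
  · rw [Nat.sub_le_iff_le_add, MajAux.length_eq_sum L, MajAux.fitness_eq_sum L,
      MajAux.redundant_eq_sum L, Finset.mul_sum, ← Finset.sum_add_distrib]
    exact Finset.sum_le_sum fun i _ => MajAux.point1 _ _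
  · rw [Nat.sub_le_iff_le_add, MajAux.absent_eq_sum L, MajAux.fitness_eq_sum L,
      MajAux.redundant_eq_sum L, ← Finset.sum_add_distrib, ← Finset.sum_add_distrib]
    refine le_trans (le_of_eq (by simp : (n : ℕ) = ∑ _i : Fin n, (1 : ℕ)))
      (Finset.sum_le_sum fun i _ => MajAux.point2 _ _)
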